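/- arXiv:2010.08061 — 2 statements merged into one kernel-verified Lean document; each statement's English description precedes it below -/
import Mathlib

section
/- Let 0 < ε < 1/6 and consider the 4-armed, 2-dimensional loss matrix with columns ℓ'_1 = ((1−ε)/4, 3/4), ℓ'_2 = (3/4, 1/4), ℓ'_3 = ((3−ε)/8, (3+ε)/8), ℓ'_4 = ((3+ε)/8, (3−ε)/8). Then the minimum loss in dimension 1 is (1−ε)/4 (attained only by arm 1) and in dimension 2 is 1/4 (attained only by arm 2), and the function g(ω) = max{ ((2+ε)/4)·ω_2 + ((1+ε)/8)·ω_3 + ((1+3ε)/8)·ω_4 , (1/2)·ω_1 + ((1+ε)/8)·ω_3 + ((1−ε)/8)·ω_4 }, which is the ℓ∞-norm of the expected relative loss of the weight ω, attains its minimum over the probability simplex Σ_4 uniquely at ω = (0, 0, 1, 0), with minimum value (1+ε)/8. -/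
/-- Optimal weight computation for the alternative model ν′ in the proof of the
Ω(T^{2/3}) regret lower bound: for 0 < ε < 1/6 the ℓ∞-norm of the expected
relative loss g is uniquely minimized over the simplex at ω = (0,0,1,0), with
value (1+ε)/8. -/
theorem optimal_weight_alternative_model
    (ε : ℝ) (hε : 0 < ε) (hε' : ε < 1/6)
    (ℓ : Fin 2 → Fin 4 → ℝ)
    (hℓ : ℓ = ![![(1 - ε)/4, 3/4, (3 - ε)/8, (3 + ε)/8],
                ![3/4, 1/4, (3 + ε)/8, (3 - ε)/8]])
    (g : (Fin 4 → ℝ) → ℝ)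
    (hg : g = fun ω => max
        ((2 + ε)/4 * ω 1 + (1 + ε)/8 * ω 2 + (1 + 3*ε)/8 * ω 3)
        ((1/2) * ω 0 + (1 + ε)/8 * ω 2 + (1 - ε)/8 * ω 3)) :
    -- minimum loss in dimension 1 is (1−ε)/4, attained only by arm 1
    (ℓ 0 0 = (1 - ε)/4 ∧ ∀ k, k ≠ 0 → (1 - ε)/4 < ℓ 0 k) ∧
    -- minimum loss in dimension 2 is 1/4, attained only by arm 2
    (ℓ 1 1 = 1/4 ∧ ∀ k, k ≠ 1 → (1/4 : ℝ) < ℓ 1 k) ∧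
    -- g is the ℓ∞-norm of the expected relative loss of the weight ω
    (∀ ω : Fin 4 → ℝ, (∀ k, ω k ∈ Set.Icc (0:ℝ) 1) → (∑ k, ω k) = 1 →
      g ω = ⨆ i, ∑ k, ω k * (ℓ i k - ⨅ k', ℓ i k')) ∧
    -- the minimum over the simplex is uniquely attained at (0,0,1,0), with value (1+ε)/8
    (g ![0, 0, 1, 0] = (1 + ε)/8 ∧
      ∀ ω : Fin 4 → ℝ, (∀ k, ω k ∈ Set.Icc (0:ℝ) 1) → (∑ k, ω k) = 1 →
        ω ≠ ![0, 0, 1, 0] → (1 + ε)/8 < g ω) := by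
  subst hg
  have hinf0 : (⨅ k', ℓ 0 k') = (1 - ε)/4 := by
    apply le_antisymm
    · exact (ciInf_le (Set.Finite.bddBelow (Set.finite_range _)) (0 : Fin 4)).trans (by simp [hℓ])
    · apply le_ciInf
      intro k
      fin_cases k <;> simp [hℓ] <;> linarith
  have hinf1 : (⨅ k', ℓ 1 k') = 1/4 := by
    apply le_antisymm
    · exact (ciInf_le (Set.Finite.bddBelow (Set.finite_range _)) (1 : Fin 4)).trans (by norm_num [hℓ])
    · apply le_ciInf
      intro k
      fin_cases k <;> simp [hℓ] <;> linarith
  refine ⟨⟨by simp [hℓ], ?_⟩, ⟨by norm_num [hℓ], ?_⟩, ?_, ?_, ?_⟩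
  · intro k hk; fin_cases k
    · exact absurd rfl hk
    · simp [hℓ]; linarith
    · simp [hℓ]; linarith
    · simp [hℓ]; linarith
  · intro k hk; fin_cases k
    · simp [hℓ]; linarith
    · exact absurd rfl hk
    · simp [hℓ]; linarith
    · simp [hℓ]; linarith
  · intro ω hω hs
    have key0 : ∑ k, ω k * (ℓ 0 k - ⨅ k', ℓ 0 k') =
        (2 + ε)/4 * ω 1 + (1 + ε)/8 * ω 2 + (1 + 3*ε)/8 * ω 3 := by
      rw [hinf0]; simp [hℓ, Fin.sum_univ_four]; ring
    have key1 : ∑ k, ω k * (ℓ 1 k - ⨅ k', ℓ 1 k') =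
        (1/2) * ω 0 + (1 + ε)/8 * ω 2 + (1 - ε)/8 * ω 3 := by
      rw [hinf1]; simp [hℓ, Fin.sum_univ_four]; ring
    show max ((2 + ε)/4 * ω 1 + (1 + ε)/8 * ω 2 + (1 + 3*ε)/8 * ω 3)
        ((1/2) * ω 0 + (1 + ε)/8 * ω 2 + (1 - ε)/8 * ω 3) = _
    apply le_antisymm
    · apply max_le
      · rw [← key0]
        exact le_ciSup (f := fun i : Fin 2 => ∑ k, ω k * (ℓ i k - ⨅ k', ℓ i k'))
          (Set.Finite.bddAbove (Set.finite_range _)) 0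
      · rw [← key1]
        exact le_ciSup (f := fun i : Fin 2 => ∑ k, ω k * (ℓ i k - ⨅ k', ℓ i k'))
          (Set.Finite.bddAbove (Set.finite_range _)) 1
    · refine ciSup_le (Fin.forall_fin_two.mpr ⟨?_, ?_⟩)
      · rw [key0]; exact le_max_left _ _
      · rw [key1]; exact le_max_right _ _
  · show max _ _ = _
    norm_num [Matrix.cons_val_two, Matrix.cons_val_three]
  · intro ω hω hs hne
    have hs4 : ω 0 + ω 1 + ω 2 + ω 3 = 1 := by
      simpa [Fin.sum_univ_four] using hs
    have h0 := (hω 0).1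
    have h1 := (hω 1).1
    have h2 := (hω 2).1
    have h3 := (hω 3).1
    show (1 + ε)/8 < max ((2 + ε)/4 * ω 1 + (1 + ε)/8 * ω 2 + (1 + 3*ε)/8 * ω 3)
        ((1/2) * ω 0 + (1 + ε)/8 * ω 2 + (1 - ε)/8 * ω 3)
    set A := (2 + ε)/4 * ω 1 + (1 + ε)/8 * ω 2 + (1 + 3*ε)/8 * ω 3 with hA
    set B := (1/2) * ω 0 + (1 + ε)/8 * ω 2 + (1 - ε)/8 * ω 3 with hB
    clear_value A B
    have hmaxA : A ≤ max A B := le_max_left A B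
    have hmaxB : B ≤ max A B := le_max_right A B
    rcases lt_or_eq_of_le h0 with h0p | h0z
    · have : (1 + ε)/4 < A + B := by nlinarith
      linarith
    rcases lt_or_eq_of_le h1 with h1p | h1z
    · have : (1 + ε)/4 < A + B := by nlinarith
      linarith
    rcases lt_or_eq_of_le h3 with h3p | h3z
    · have : (1 + ε)/8 < A := by nlinarith
      linarith
    exfalso
    apply hne
    funext k
    have h2v : ω 2 = 1 := by linarith
    fin_cases k <;> simp [← h0z, ← h1z, ← h3z, h2v]
end

section
/- Let ε ∈ (0, 1/6] and let N_1, N_2, N_3, N_4 ≥ 0 be real numbers with N_1 + N_2 + N_3 + N_4 = T. Then max{ −((1+ε)/8)·N_1 + ((3+ε)/8)·N_2 + (ε/4)·N_4 , ((3−ε)/8)·N_1 − ((1+ε)/8)·N_2 − (ε/4)·N_4 } ≥ (1/144)·N_1 + (1/6)·N_2 + (ε/12)·(T − N_3). -/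
/-- Pointwise regret lower bound in the proof of the Ω(T^{2/3}) lower bound. -/
theorem regret_pointwise_lower_bound
    (ε T N₁ N₂ N₃ N₄ : ℝ) (hε : 0 < ε) (hε' : ε ≤ 1/6)
    (h₁ : 0 ≤ N₁) (h₂ : 0 ≤ N₂) (h₃ : 0 ≤ N₃) (h₄ : 0 ≤ N₄)
    (hT : N₁ + N₂ + N₃ + N₄ = T) :
    max (-((1 + ε)/8) * N₁ + (3 + ε)/8 * N₂ + ε/4 * N₄)
        ((3 - ε)/8 * N₁ - (1 + ε)/8 * N₂ - ε/4 * N₄)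
    ≥ 1/144 * N₁ + 1/6 * N₂ + ε/12 * (T - N₃) := by
  have hA := le_max_left (-((1 + ε)/8) * N₁ + (3 + ε)/8 * N₂ + ε/4 * N₄)
      ((3 - ε)/8 * N₁ - (1 + ε)/8 * N₂ - ε/4 * N₄)
  have hB := le_max_right (-((1 + ε)/8) * N₁ + (3 + ε)/8 * N₂ + ε/4 * N₄)
      ((3 - ε)/8 * N₁ - (1 + ε)/8 * N₂ - ε/4 * N₄)
  nlinarith [mul_nonneg h₁ hε.le, mul_nonneg h₂ hε.le, mul_nonneg h₁ (sub_nonneg.2 hε'), mul_nonneg h₂ (by linarith : (0:ℝ) ≤ 1 - ε)]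
end
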